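/- Let m, M, N be positive integers and let A_1, …, A_M be N×N real symmetric positive semidefinite matrices such that for each k there is an index set S_k ⊆ {1, …, N} with |S_k| ≤ m and (A_k)_{ij} = 0 whenever i ∉ S_k or j ∉ S_k. Let A = Σ_{k=1}^M A_k and assume A_{jj} > 0 for all j. Let S = diag(√A_{11}, …, √A_{NN}). Then 1 ≤ λ_max(S⁻¹AS⁻¹) ≤ m. -/

import Mathlib

open Matrix

/-- Entry inequality for real PSD matrices: `B i j ^ 2 ≤ B i i * B j j`. -/
lemma psd_entry_sq_le {n : ℕ} {B : Matrix (Fin n) (Fin n) ℝ} (hB : B.PosSemidef)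
    (i j : Fin n) : B i j ^ 2 ≤ B i i * B j j := by
  have hsym : B j i = B i j := by
    have := congrFun (congrFun hB.1 i) j
    simpa [Matrix.conjTranspose_apply] using this
  have key : ∀ t : ℝ, 0 ≤ B i i * (t * t) + (2 * B i j) * t + B j j := by
    intro t
    set x : Fin n → ℝ := t • (Pi.single i 1 : Fin n → ℝ) + (Pi.single j 1 : Fin n → ℝ) with hx
    have h := hB.dotProduct_mulVec_nonneg x
    rw [star_trivial] at h
    have e : x ⬝ᵥ (B *ᵥ x) = B i i * (t * t) + (2 * B i j) * t + B j j := by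
      simp only [hx, mulVec_add, mulVec_smul, mulVec_single_one, col_apply, dotProduct_add,
        dotProduct_smul, add_dotProduct, smul_dotProduct, single_dotProduct,
        smul_eq_mul, Pi.add_apply, Pi.smul_apply, mul_one]
      rw [hsym]; ring
    rw [e] at h
    exact h
  have hd := discrim_le_zero key
  rw [discrim] at hd
  nlinarith [hd]

/-- Sum of eigenvalues equals the trace, for real symmetric matrices. -/
lemma sum_eigenvalues_eq_trace' {n : ℕ} {B : Matrix (Fin n) (Fin n) ℝ}
    (hB : B.IsHermitian) : ∑ i, hB.eigenvalues i = B.trace := by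
  rw [hB.trace_eq_sum_eigenvalues]
  simp

/-- The largest eigenvalue of the Jacobi (diagonal) preconditioned matrix
`S⁻¹AS⁻¹`, where `A` is a sum of positive semidefinite matrices each supported
on an index set of size at most `m` and `S = diag(√A_jj)`, lies in `[1, m]`. -/
theorem largest_eigenvalue_jacobi_preconditioned_bound
    {m M N : ℕ} (hm : 0 < m) (hM : 0 < M) (hN : 0 < N)
    (A : Fin M → Matrix (Fin N) (Fin N) ℝ)
    (hA : ∀ k, (A k).PosSemidef)
    (S : Fin M → Finset (Fin N)) (hScard : ∀ k, (S k).card ≤ m)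
    (hsupp : ∀ k, ∀ i j : Fin N, i ∉ S k ∨ j ∉ S k → A k i j = 0)
    (hdiag : ∀ j, 0 < (∑ k, A k) j j)
    (E : Matrix (Fin N) (Fin N) ℝ)
    (hE : E = Matrix.diagonal (fun j => (Real.sqrt ((∑ k, A k) j j))⁻¹) *
        (∑ k, A k) *
        Matrix.diagonal (fun j => (Real.sqrt ((∑ k, A k) j j))⁻¹))
    (hEh : E.IsHermitian) :
    1 ≤ (⨆ i, hEh.eigenvalues i) ∧ (⨆ i, hEh.eigenvalues i) ≤ m := by
  haveI : NeZero N := ⟨hN.ne'⟩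
  haveI : Nonempty (Fin N) := ⟨⟨0, hN⟩⟩
  set T : Matrix (Fin N) (Fin N) ℝ := ∑ k, A k with hT
  set d : Fin N → ℝ := fun j => (Real.sqrt (T j j))⁻¹ with hd
  have hdpos : ∀ j, 0 < d j := fun j => inv_pos.2 (Real.sqrt_pos.2 (hdiag j))
  have hd2 : ∀ j, d j ^ 2 * T j j = 1 := by
    intro j
    show (Real.sqrt (T j j))⁻¹ ^ 2 * T j j = 1
    rw [inv_pow, Real.sq_sqrt (hdiag j).le, inv_mul_cancel₀ (hdiag j).ne']
  set B : Fin M → Matrix (Fin N) (Fin N) ℝ :=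
    fun k => Matrix.diagonal d * A k * Matrix.diagonal d with hB
  have hEB : E = ∑ k, B k := by
    rw [hE, Finset.mul_sum, Finset.sum_mul]
  have hBpsd : ∀ k, (B k).PosSemidef := by
    intro k
    have := (hA k).mul_mul_conjTranspose_same (Matrix.diagonal d)
    simpa [Matrix.diagonal_conjTranspose] using this
  have hBapp : ∀ k i j, B k i j = d i * A k i j * d j := by
    intro k i j
    simp [hB, Matrix.diagonal_mul, Matrix.mul_diagonal]
  have hTapp : ∀ i j, T i j = ∑ k, A k i j := by
    intro i j; rw [hT]; simp [Matrix.sum_apply]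
  have hBdiagsum : ∀ i, ∑ k, B k i i = 1 := by
    intro i
    have h1 : ∑ k, B k i i = d i ^ 2 * T i i := by
      rw [hTapp, Finset.mul_sum]
      exact Finset.sum_congr rfl fun k _ => by rw [hBapp]; ring
    rw [h1, hd2]
  have hEapp : ∀ i j, E i j = ∑ k, B k i j := by
    intro i j; rw [hEB]; simp [Matrix.sum_apply]
  -- Rayleigh quotient bound
  have key : ∀ v : Fin N → ℝ, (∑ j, v j ^ 2) = 1 → v ⬝ᵥ E *ᵥ v ≤ m := by
    intro v hv
    have expand : v ⬝ᵥ E *ᵥ v = ∑ k, ∑ i, ∑ j, v i * B k i j * v j := by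
      calc v ⬝ᵥ E *ᵥ v = ∑ i, ∑ j, v i * (E i j * v j) := by
            simp [dotProduct, mulVec, Finset.mul_sum]
        _ = ∑ i, ∑ j, ∑ k, v i * B k i j * v j := by
            refine Finset.sum_congr rfl fun i _ => Finset.sum_congr rfl fun j _ => ?_
            rw [hEapp, Finset.sum_mul, Finset.mul_sum]
            exact Finset.sum_congr rfl fun k _ => by ring
        _ = ∑ i, ∑ k, ∑ j, v i * B k i j * v j := by
            exact Finset.sum_congr rfl fun i _ => Finset.sum_comm
        _ = ∑ k, ∑ i, ∑ j, v i * B k i j * v j := Finset.sum_comm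
    rw [expand]
    have step : ∀ k, ∑ i, ∑ j, v i * B k i j * v j ≤ m * ∑ i, B k i i * v i ^ 2 := by
      intro k
      set g : Fin N → ℝ := fun i => |v i| * Real.sqrt (B k i i) with hg
      have hdiagBnn : ∀ i, 0 ≤ B k i i := by
        intro i
        have h := (hBpsd k).dotProduct_mulVec_nonneg (Pi.single i 1)
        rw [star_trivial] at h
        simpa [mulVec_single, single_dotProduct] using h
      have hrow : ∀ i, ∑ j, v i * B k i j * v j = ∑ j ∈ S k, v i * B k i j * v j := by
        intro i
        refine (Finset.sum_subset (Finset.subset_univ _) fun j _ hj => ?_).symm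
        rw [hBapp, hsupp k i j (Or.inr hj)]; ring
      have hrestrict : ∑ i, ∑ j, v i * B k i j * v j
          = ∑ i ∈ S k, ∑ j ∈ S k, v i * B k i j * v j := by
        rw [Finset.sum_congr rfl fun i _ => hrow i]
        refine (Finset.sum_subset (Finset.subset_univ _) fun i _ hi => ?_).symm
        refine Finset.sum_eq_zero fun j _ => ?_
        rw [hBapp, hsupp k i j (Or.inl hi)]; ring
      have hterm : ∀ i ∈ S k, ∀ j ∈ S k, v i * B k i j * v j ≤ g i * g j := by
        intro i _ j _
        have habs : |B k i j| ≤ Real.sqrt (B k i i) * Real.sqrt (B k j j) := by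
          rw [← Real.sqrt_mul (hdiagBnn i), ← Real.sqrt_sq_eq_abs]
          exact Real.sqrt_le_sqrt (psd_entry_sq_le (hBpsd k) i j)
        calc v i * B k i j * v j ≤ |v i * B k i j * v j| := le_abs_self _
          _ = |v i| * |B k i j| * |v j| := by rw [abs_mul, abs_mul]
          _ ≤ |v i| * (Real.sqrt (B k i i) * Real.sqrt (B k j j)) * |v j| := by
              refine mul_le_mul_of_nonneg_right ?_ (abs_nonneg _)
              exact mul_le_mul_of_nonneg_left habs (abs_nonneg _)
          _ = g i * g j := by rw [hg]; ring
      have hgsq : ∀ i, g i ^ 2 = B k i i * v i ^ 2 := by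
        intro i
        rw [hg]
        simp only []
        rw [mul_pow, sq_abs, Real.sq_sqrt (hdiagBnn i)]
        ring
      calc ∑ i, ∑ j, v i * B k i j * v j
          = ∑ i ∈ S k, ∑ j ∈ S k, v i * B k i j * v j := hrestrict
        _ ≤ ∑ i ∈ S k, ∑ j ∈ S k, g i * g j :=
            Finset.sum_le_sum fun i hi => Finset.sum_le_sum fun j hj => hterm i hi j hj
        _ = (∑ i ∈ S k, g i) ^ 2 := by rw [sq, Finset.sum_mul_sum]
        _ ≤ (S k).card * ∑ i ∈ S k, g i ^ 2 := sq_sum_le_card_mul_sum_sq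
        _ ≤ m * ∑ i ∈ S k, g i ^ 2 := by
            refine mul_le_mul_of_nonneg_right ?_ ?_
            · exact_mod_cast hScard k
            · exact Finset.sum_nonneg fun i _ => sq_nonneg _
        _ = m * ∑ i ∈ S k, B k i i * v i ^ 2 := by
            rw [Finset.sum_congr rfl fun i _ => hgsq i]
        _ ≤ m * ∑ i, B k i i * v i ^ 2 := by
            refine mul_le_mul_of_nonneg_left ?_ (Nat.cast_nonneg m)
            refine Finset.sum_le_sum_of_subset_of_nonneg (Finset.subset_univ _)
              fun i _ _ => mul_nonneg (hdiagBnn i) (sq_nonneg _)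
    calc ∑ k, ∑ i, ∑ j, v i * B k i j * v j
        ≤ ∑ k, (m : ℝ) * ∑ i, B k i i * v i ^ 2 := Finset.sum_le_sum fun k _ => step k
      _ = m * ∑ i, (∑ k, B k i i) * v i ^ 2 := by
          rw [← Finset.mul_sum, Finset.sum_comm]
          congr 1
          exact Finset.sum_congr rfl fun i _ => by rw [Finset.sum_mul]
      _ = m := by
          simp only [hBdiagsum, one_mul, hv, mul_one]
  have bdd : BddAbove (Set.range hEh.eigenvalues) := Set.Finite.bddAbove (Set.finite_range _)
  constructor
  · have hEii : ∀ i, E i i = 1 := fun i => by rw [hEapp, hBdiagsum]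
    have htrace : E.trace = N := by
      simp [Matrix.trace, Matrix.diag, hEii]
    have hsum : ∑ i, hEh.eigenvalues i = N := by
      rw [sum_eigenvalues_eq_trace', htrace]
    have hex : ∃ i ∈ Finset.univ, (1:ℝ) ≤ hEh.eigenvalues i := by
      apply Finset.exists_le_of_sum_le Finset.univ_nonempty
      rw [hsum]; simp
    obtain ⟨i, _, hi⟩ := hex
    exact le_trans hi (le_ciSup bdd i)
  · apply ciSup_le
    intro i
    rw [hEh.eigenvalues_eq]
    set v : Fin N → ℝ := ⇑(hEh.eigenvectorBasis i) with hv
    have hnorm : ∑ j, v j ^ 2 = 1 := by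
      have h1 : ‖hEh.eigenvectorBasis i‖ = 1 := hEh.eigenvectorBasis.orthonormal.1 i
      have h2 := EuclideanSpace.norm_eq (hEh.eigenvectorBasis i)
      rw [h1] at h2
      have h3 : Real.sqrt (∑ j, ‖v j‖ ^ 2) = 1 := h2.symm
      have h4 := congrArg (· ^ 2) h3
      simp only [one_pow] at h4
      rw [Real.sq_sqrt (by positivity)] at h4
      simpa [Real.norm_eq_abs, sq_abs] using h4
    have h := key v hnorm
    simpa [star_trivial] using h
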